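/- Density of the domain in the intermediate spaces: for every 1 ≤ q < ∞ and θ ∈ (0,1), the domain D(A) is dense in D_A(θ,q) (with respect to its norm) and dense in the real interpolation space (X, D(Ȧ))_{θ,q}. -/

import Mathlib

open MeasureTheory Filter Topology Set
open scoped ENNReal NNReal

attribute [local instance] Classical.propDecidable

noncomputable section

/-- The measure `dt/t` on `(0,∞)`, used for the `L_{q,*}` spaces. -/
def haarScale : MeasureTheory.Measure ℝ :=
  (MeasureTheory.volume.restrict (Set.Ioi (0:ℝ))).withDensity fun t => ENNReal.ofReal t⁻¹

/-- The `L_q` norm of an `ℝ≥0∞`-valued quantity with respect to a measure on `ℝ`. -/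
def lqNorm (q : ℝ≥0∞) (μ : MeasureTheory.Measure ℝ) (F : ℝ → ℝ≥0∞) : ℝ≥0∞ :=
  if q = ⊤ then essSup F μ else (∫⁻ t, F t ^ q.toReal ∂μ) ^ (1 / q.toReal)

/-- The time interval `(0, T)` for `T ∈ (0,∞]`. -/
def timeInterval (T : ℝ≥0∞) : Set ℝ := {t : ℝ | 0 < t ∧ ENNReal.ofReal t < T}

/-- The abstract setting of the homogeneous Da Prato–Grisvard theory: `X` is a complex
Banach space, `A : D(A) ⊆ X → X` is a closed, densely defined, injective linear operator
such that `−A` generates a bounded strongly continuous analytic semigroup `(e^{−tA})_{t≥0}`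
(encoded by the field `S` together with the bounds `S_bdd` and `S_analytic` and the
generator identities `gen_eq` and `gen_eq_dom`); `Y` is a normed space, compatible with `X`
inside an ambient Hausdorff topological vector space `Z`, with `D(A) ⊆ Y` and
`C₁‖Ax‖ ≤ ‖x‖_Y ≤ C₂‖Ax‖` on `D(A)`; moreover `D(Ȧ) ∩ X = D(A)` (field `inter_sub`). -/
structure DPG (X Y Z : Type*) [NormedAddCommGroup X] [NormedSpace ℂ X] [CompleteSpace X]
    [NormedAddCommGroup Y] [NormedSpace ℂ Y]
    [AddCommGroup Z] [Module ℂ Z] [TopologicalSpace Z] [T2Space Z] : Type _ where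
  ιX : X →ₗ[ℂ] Z
  ιY : Y →ₗ[ℂ] Z
  ιX_inj : Function.Injective ιX
  ιY_inj : Function.Injective ιY
  dom : Submodule ℂ X
  dom_dense : Dense (dom : Set X)
  Aop : dom →ₗ[ℂ] X
  A_closed : IsClosed {p : X × X | ∃ x : dom, (x : X) = p.1 ∧ Aop x = p.2}
  A_inj : ∀ x : dom, Aop x = 0 → (x : X) = 0
  jY : dom →ₗ[ℂ] Y
  j_compat : ∀ x : dom, ιX (x : X) = ιY (jY x)
  C₁ : ℝ
  C₂ : ℝ
  C₁_pos : 0 < C₁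
  C₂_pos : 0 < C₂
  normY_lower : ∀ x : dom, C₁ * ‖Aop x‖ ≤ ‖jY x‖
  normY_upper : ∀ x : dom, ‖jY x‖ ≤ C₂ * ‖Aop x‖
  S : ℝ → X →L[ℂ] X
  S_zero : S 0 = 1
  S_add : ∀ s t : ℝ, 0 ≤ s → 0 ≤ t → S (s + t) = (S s).comp (S t)
  S_strong_cont : ∀ x : X, ContinuousOn (fun t => S t x) (Set.Ici (0:ℝ))
  M₀ : ℝ
  S_bdd : ∀ t : ℝ, 0 ≤ t → ‖S t‖ ≤ M₀
  S_smoothing : ∀ (t : ℝ), 0 < t → ∀ x : X, S t x ∈ dom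
  M : ℝ
  S_analytic : ∀ (t : ℝ) (ht : 0 < t) (x : X),
    t * ‖Aop ⟨S t x, S_smoothing t ht x⟩‖ ≤ M * ‖x‖
  int_mem : ∀ (x : X) (t : ℝ), (∫ s in Set.Ioc (0:ℝ) t, S s x) ∈ dom
  gen_eq : ∀ (x : X) (t : ℝ), 0 ≤ t →
    Aop ⟨∫ s in Set.Ioc (0:ℝ) t, S s x, int_mem x t⟩ = x - S t x
  gen_eq_dom : ∀ (x : dom) (t : ℝ), 0 ≤ t →
    S t (x : X) - (x : X) = - ∫ s in Set.Ioc (0:ℝ) t, S s (Aop x)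
  inter_sub : ∀ (x : X) (y : Y),
    (∃ u : ℕ → dom, Filter.Tendsto (fun n => jY (u n)) Filter.atTop (nhds y)) →
    ιX x = ιY y → x ∈ dom

namespace DPG

variable {X Y Z : Type*} [NormedAddCommGroup X] [NormedSpace ℂ X] [CompleteSpace X]
  [NormedAddCommGroup Y] [NormedSpace ℂ Y]
  [AddCommGroup Z] [Module ℂ Z] [TopologicalSpace Z] [T2Space Z]
  (E : DPG X Y Z)

/-- `A` as an everywhere-defined function on `X` (junk value `0` off the domain). -/
def Afun (x : X) : X := if h : x ∈ E.dom then E.Aop ⟨x, h⟩ else 0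

/-- The domain `D(Ȧ) ⊆ Y` of the homogeneous operator: limits in `Y` of sequences in `D(A)`. -/
def DdotA : Set Y :=
  {y : Y | ∃ u : ℕ → E.dom, Filter.Tendsto (fun n => E.jY (u n)) Filter.atTop (nhds y)}

/-- The homogeneous operator `Ȧ : D(Ȧ) → X`, `Ȧ y = lim_k A x_k` for `x_k → y` in `Y`. -/
def Adot (y : Y) : X :=
  @Classical.epsilon X ⟨0⟩ fun L =>
    ∃ u : ℕ → E.dom, Filter.Tendsto (fun n => E.jY (u n)) Filter.atTop (nhds y) ∧
      Filter.Tendsto (fun n => E.Aop (u n)) Filter.atTop (nhds L)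

/-- The sum space `X + D(Ȧ)`, realized inside the ambient space `Z`. -/
def sumSpace : Set Z :=
  {z : Z | ∃ (x : X) (y : Y), y ∈ E.DdotA ∧ z = E.ιX x + E.ιY y}

/-- A choice of the `X`-component of an element of `X + D(Ȧ)`. -/
def decompX (z : Z) : X :=
  if h : ∃ (x : X) (y : Y), y ∈ E.DdotA ∧ z = E.ιX x + E.ιY y then h.choose else 0

/-- A choice of the `D(Ȧ)`-component of an element of `X + D(Ȧ)`. -/
def decompY (z : Z) : Y :=
  if h : ∃ (x : X) (y : Y), y ∈ E.DdotA ∧ z = E.ιX x + E.ιY y then h.choose_spec.choose else 0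

/-- `Ȧ` acting on elements of `Z` lying in (the image of) `D(Ȧ)`. -/
def AdotZ (z : Z) : X :=
  if h : ∃ y : Y, y ∈ E.DdotA ∧ E.ιY y = z then E.Adot h.choose else 0

/-- The extension of the semigroup to the sum space:
`e^{−tA}(x+y) = e^{−tA}x + y − ∫₀ᵗ e^{−sA}Ȧy ds`. -/
def SGext (t : ℝ) (z : Z) : Z :=
  E.ιX (E.S t (E.decompX z) - ∫ s in Set.Ioc (0:ℝ) t, E.S s (E.Adot (E.decompY z)))
    + E.ιY (E.decompY z)

/-- `Ȧ e^{−tA} z` for `z ∈ X + D(Ȧ)`. -/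
def AdotSG (z : Z) (t : ℝ) : X := E.AdotZ (E.SGext t z)

/-- The homogeneous Da Prato–Grisvard norm `‖z‖_{Ḋ_A(θ,q)}` on the sum space. -/
def homNorm (θ : ℝ) (q : ℝ≥0∞) (z : Z) : ℝ≥0∞ :=
  MeasureTheory.eLpNorm (fun t : ℝ => t ^ (1 - θ) • E.AdotSG z t) q haarScale

/-- The homogeneous Da Prato–Grisvard norm of an element of `X`
(for which `Ȧe^{−tA}x = Ae^{−tA}x`). -/
def homNormX (θ : ℝ) (q : ℝ≥0∞) (x : X) : ℝ≥0∞ :=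
  MeasureTheory.eLpNorm (fun t : ℝ => t ^ (1 - θ) • E.Afun (E.S t x)) q haarScale

/-- The (inhomogeneous) norm of `D_A(θ,q)`. -/
def inhomNorm (θ : ℝ) (q : ℝ≥0∞) (x : X) : ℝ≥0∞ :=
  ENNReal.ofReal ‖x‖ + E.homNormX θ q x

/-- Membership in `D_A(θ,q)`. -/
def memDA (θ : ℝ) (q : ℝ≥0∞) (x : X) : Prop :=
  MeasureTheory.AEStronglyMeasurable (fun t : ℝ => t ^ (1 - θ) • E.Afun (E.S t x)) haarScale ∧
    E.homNormX θ q x < ⊤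

/-- Membership in `Ḋ_A(θ,q)`. -/
def memDdot (θ : ℝ) (q : ℝ≥0∞) (z : Z) : Prop :=
  z ∈ E.sumSpace ∧
    MeasureTheory.AEStronglyMeasurable (fun t : ℝ => t ^ (1 - θ) • E.AdotSG z t) haarScale ∧
    E.homNorm θ q z < ⊤

/-- The `K`-functional of the interpolation couple `(X, D(Ȧ))`. -/
def Kfun (t : ℝ) (z : Z) : ℝ≥0∞ :=
  ⨅ (x : X) (y : Y) (_ : y ∈ E.DdotA) (_ : E.ιX x + E.ιY y = z),
    ENNReal.ofReal (‖x‖ + t * ‖E.Adot y‖)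

/-- The real interpolation norm of `(X, D(Ȧ))_{θ,q}`. -/
def interpNorm (θ : ℝ) (q : ℝ≥0∞) (z : Z) : ℝ≥0∞ :=
  lqNorm q haarScale fun t => ENNReal.ofReal (t ^ (-θ)) * E.Kfun t z

end DPG

open intervalIntegral
lemma setLIntegral_haarScale {A : Set ℝ} (hA : MeasurableSet A) (hA' : A ⊆ Set.Ioi 0)
    {f : ℝ → ℝ≥0∞} (hf : Measurable f) :
    ∫⁻ r in A, f r ∂haarScale = ∫⁻ r in A, ENNReal.ofReal r⁻¹ * f r ∂volume := by
  rw [haarScale, restrict_withDensity hA,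
    lintegral_withDensity_eq_lintegral_mul _ (by fun_prop) hf,
    Measure.restrict_restrict hA, Set.inter_eq_self_of_subset_left hA']
  rfl

lemma lintegral_haar_Ioc_rpow {a s : ℝ} (ha : 0 < a) (hs : 0 < s) :
    ∫⁻ r in Set.Ioc 0 s, ENNReal.ofReal (r ^ a) ∂haarScale = ENNReal.ofReal (s ^ a / a) := by
  rw [setLIntegral_haarScale measurableSet_Ioc (fun r hr => hr.1) (by fun_prop)]
  have h1 : ∫⁻ r in Set.Ioc 0 s, ENNReal.ofReal r⁻¹ * ENNReal.ofReal (r ^ a) ∂volume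
      = ∫⁻ r in Set.Ioc 0 s, ENNReal.ofReal (r ^ (a - 1)) ∂volume := by
    refine setLIntegral_congr_fun measurableSet_Ioc ?_
    intro r hr; beta_reduce
    rw [← ENNReal.ofReal_mul (inv_nonneg.2 hr.1.le)]
    congr 1
    rw [← Real.rpow_neg_one r, ← Real.rpow_add hr.1]
    ring_nf
  rw [h1]
  have hint : IntegrableOn (fun r : ℝ => r ^ (a - 1)) (Set.Ioc 0 s) := by
    have := intervalIntegral.intervalIntegrable_rpow' (a := 0) (b := s)
      (by linarith : (-1:ℝ) < a - 1)
    rwa [intervalIntegrable_iff_integrableOn_Ioc_of_le hs.le] at this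
  rw [← ofReal_integral_eq_lintegral_ofReal hint
    ((ae_restrict_iff' measurableSet_Ioc).2 (Filter.Eventually.of_forall
      (fun r hr => Real.rpow_nonneg hr.1.le _)))]
  congr 1
  rw [← intervalIntegral.integral_of_le hs.le, integral_rpow (Or.inl (by linarith))]
  rw [Real.zero_rpow (by linarith : a - 1 + 1 ≠ 0)]
  ring_nf

lemma lintegral_haar_Ioi_rpow {a t : ℝ} (ha : 0 < a) (ht : 0 < t) :
    ∫⁻ r in Set.Ioi t, ENNReal.ofReal (r ^ (-a)) ∂haarScale = ENNReal.ofReal (t ^ (-a) / a) := by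
  rw [setLIntegral_haarScale measurableSet_Ioi (fun r hr => lt_trans ht hr) (by fun_prop)]
  have h1 : ∫⁻ r in Set.Ioi t, ENNReal.ofReal r⁻¹ * ENNReal.ofReal (r ^ (-a)) ∂volume
      = ∫⁻ r in Set.Ioi t, ENNReal.ofReal (r ^ (-a - 1)) ∂volume := by
    refine setLIntegral_congr_fun measurableSet_Ioi ?_
    intro r hr; beta_reduce
    rw [← ENNReal.ofReal_mul (inv_nonneg.2 (lt_trans ht hr).le)]
    congr 1
    rw [← Real.rpow_neg_one r, ← Real.rpow_add (lt_trans ht hr)]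
    ring_nf
  rw [h1]
  have hint : IntegrableOn (fun r : ℝ => r ^ (-a - 1)) (Set.Ioi t) :=
    integrableOn_Ioi_rpow_of_lt (by linarith) ht
  rw [← ofReal_integral_eq_lintegral_ofReal hint
    ((ae_restrict_iff' measurableSet_Ioi).2 (Filter.Eventually.of_forall
      (fun r hr => Real.rpow_nonneg (lt_trans ht hr).le _)))]
  congr 1
  rw [integral_Ioi_rpow_of_lt (by linarith) ht]
  rw [show -a - 1 + 1 = -a by ring]
  field_simp

lemma haarScale_Ioi_top {t : ℝ} (ht : 0 < t) : haarScale (Set.Ioi t) = ⊤ := by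
  by_contra h
  have hfin : ∫⁻ r in Set.Ioi t, ENNReal.ofReal r⁻¹ ∂volume < ⊤ := by
    have := setLIntegral_haarScale measurableSet_Ioi
      (fun r (hr : r ∈ Set.Ioi t) => lt_trans ht hr) (f := fun _ => (1:ℝ≥0∞)) measurable_const
    simp only [setLIntegral_one, mul_one] at this
    rw [← this]
    exact lt_top_iff_ne_top.2 h
  have hInt : IntegrableOn (fun r : ℝ => r ^ (-1 : ℝ)) (Set.Ioi t) := by
    refine ⟨(by fun_prop : Measurable fun r : ℝ => r ^ (-1:ℝ)).aestronglyMeasurable, ?_⟩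
    rw [hasFiniteIntegral_iff_norm]
    have : ∫⁻ r in Set.Ioi t, ENNReal.ofReal ‖r ^ (-1:ℝ)‖ ∂volume
        = ∫⁻ r in Set.Ioi t, ENNReal.ofReal r⁻¹ ∂volume := by
      refine setLIntegral_congr_fun measurableSet_Ioi ?_
      intro r hr; beta_reduce
      rw [Real.rpow_neg_one, Real.norm_eq_abs, abs_of_nonneg (inv_nonneg.2 (lt_trans ht hr).le)]
    rw [this]; exact hfin
  rw [integrableOn_Ioi_rpow_iff ht] at hInt
  linarith

lemma haarScale_Ioc_top {s : ℝ} (hs : 0 < s) : haarScale (Set.Ioc 0 s) = ⊤ := by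
  refine top_le_iff.1 ?_
  rw [← show haarScale (Set.Ioo 0 s) = ⊤ from ?_]
  · exact measure_mono Set.Ioo_subset_Ioc_self
  by_contra h
  have hfin : ∫⁻ r in Set.Ioo 0 s, ENNReal.ofReal r⁻¹ ∂volume < ⊤ := by
    have := setLIntegral_haarScale measurableSet_Ioo
      (fun r (hr : r ∈ Set.Ioo 0 s) => hr.1) (f := fun _ => (1:ℝ≥0∞)) measurable_const
    simp only [setLIntegral_one, mul_one] at this
    rw [← this]
    exact lt_top_iff_ne_top.2 h
  have hInt : IntegrableOn (fun r : ℝ => r ^ (-1 : ℝ)) (Set.Ioo 0 s) := by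
    refine ⟨(by fun_prop : Measurable fun r : ℝ => r ^ (-1:ℝ)).aestronglyMeasurable, ?_⟩
    rw [hasFiniteIntegral_iff_norm]
    have : ∫⁻ r in Set.Ioo 0 s, ENNReal.ofReal ‖r ^ (-1:ℝ)‖ ∂volume
        = ∫⁻ r in Set.Ioo 0 s, ENNReal.ofReal r⁻¹ ∂volume := by
      refine setLIntegral_congr_fun measurableSet_Ioo ?_
      intro r hr; beta_reduce
      rw [Real.rpow_neg_one, Real.norm_eq_abs, abs_of_nonneg (inv_nonneg.2 hr.1.le)]
    rw [this]; exact hfin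
  rw [integrableOn_Ioo_rpow_iff hs] at hInt
  linarith

lemma add_rpow_le_two_rpow_mul (a b : ℝ≥0∞) {p : ℝ} (hp : 0 ≤ p) :
    (a + b) ^ p ≤ 2 ^ p * (a ^ p + b ^ p) := by
  have h1 : a + b ≤ 2 * max a b := by
    rcases le_total a b with h | h
    · calc a + b ≤ b + b := by gcongr
        _ = 2 * b := (two_mul b).symm
        _ ≤ 2 * max a b := by gcongr; exact le_max_right _ _
    · calc a + b ≤ a + a := by gcongr
        _ = 2 * a := (two_mul a).symm
        _ ≤ 2 * max a b := by gcongr; exact le_max_left _ _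
  calc (a + b) ^ p ≤ (2 * max a b) ^ p := ENNReal.rpow_le_rpow h1 hp
    _ = 2 ^ p * (max a b) ^ p := ENNReal.mul_rpow_of_nonneg _ _ hp
    _ ≤ 2 ^ p * (a ^ p + b ^ p) := by
        gcongr
        rcases le_total a b with h | h
        · rw [max_eq_right h]; exact le_add_self
        · rw [max_eq_left h]; exact le_self_add

namespace DPG

variable {X Y Z : Type*} [NormedAddCommGroup X] [NormedSpace ℂ X] [CompleteSpace X]
  [NormedAddCommGroup Y] [NormedSpace ℂ Y]
  [AddCommGroup Z] [Module ℂ Z] [TopologicalSpace Z] [T2Space Z]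
  (E : DPG X Y Z)

lemma M₀_nonneg : 0 ≤ E.M₀ := le_trans (norm_nonneg _) (E.S_bdd 0 le_rfl)

lemma S_rep {y : X} (hy : y ∈ E.dom) {t : ℝ} (ht : 0 ≤ t) :
    E.S t y = y - ∫ s in Set.Ioc (0:ℝ) t, E.S s (E.Aop ⟨y, hy⟩) := by
  have h := E.gen_eq_dom ⟨y, hy⟩ t ht
  have := sub_eq_iff_eq_add.mp h
  rw [this]; abel

lemma mem_S_dom {y : X} (hy : y ∈ E.dom) {t : ℝ} (ht : 0 ≤ t) : E.S t y ∈ E.dom := by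
  rw [E.S_rep hy ht]
  exact Submodule.sub_mem _ hy (E.int_mem _ t)

lemma Aop_S_comm {y : X} (hy : y ∈ E.dom) {t : ℝ} (ht : 0 ≤ t) (h2 : E.S t y ∈ E.dom) :
    E.Aop ⟨E.S t y, h2⟩ = E.S t (E.Aop ⟨y, hy⟩) := by
  set a := E.Aop ⟨y, hy⟩ with ha
  have hI := E.int_mem a t
  have hgen := E.gen_eq a t ht
  have hrep := E.S_rep hy ht
  have hsub : (⟨E.S t y, h2⟩ : E.dom) = ⟨y, hy⟩ - ⟨∫ s in Set.Ioc (0:ℝ) t, E.S s a, hI⟩ :=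
    Subtype.ext hrep
  rw [hsub, map_sub, hgen]
  abel

lemma Afun_eq {x : X} (hx : x ∈ E.dom) : E.Afun x = E.Aop ⟨x, hx⟩ := dif_pos hx

lemma Afun_sub {a b : X} (ha : a ∈ E.dom) (hb : b ∈ E.dom) :
    E.Afun (a - b) = E.Afun a - E.Afun b := by
  rw [E.Afun_eq (Submodule.sub_mem _ ha hb), E.Afun_eq ha, E.Afun_eq hb, ← map_sub]
  rfl

lemma part1_pointwise (x : X) {s t : ℝ} (hs : 0 < s) (ht : 0 ≤ t) :
    E.Afun (E.S s (x - E.S t x)) = E.Afun (E.S s x) - E.S t (E.Afun (E.S s x)) := by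
  have hm : E.S s x ∈ E.dom := E.S_smoothing s hs x
  have hst : E.S (s + t) x = E.S t (E.S s x) := by
    rw [show s + t = t + s from add_comm s t, E.S_add t s ht hs.le]; rfl
  have hm2 : E.S (s + t) x ∈ E.dom := by rw [hst]; exact E.mem_S_dom hm ht
  have h1 : E.S s (x - E.S t x) = E.S s x - E.S (s + t) x := by
    rw [map_sub]; congr 1; rw [E.S_add s t hs.le ht]; rfl
  rw [h1, E.Afun_sub hm hm2, E.Afun_eq hm, E.Afun_eq hm2]
  congr 1
  have hm2' : E.S t (E.S s x) ∈ E.dom := by rw [← hst]; exact hm2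
  have := E.Aop_S_comm hm ht hm2'
  rw [show (⟨E.S (s+t) x, hm2⟩ : E.dom) = ⟨E.S t (E.S s x), hm2'⟩ from Subtype.ext hst]
  exact this

lemma S_tendsto_zero (v : X) :
    Filter.Tendsto (fun n : ℕ => E.S ((n + 1 : ℝ)⁻¹) v) Filter.atTop (nhds v) := by
  have hc : ContinuousWithinAt (fun t => E.S t v) (Set.Ici (0:ℝ)) 0 :=
    E.S_strong_cont v 0 Set.self_mem_Ici
  have h0 : E.S 0 v = v := by rw [E.S_zero]; rfl
  rw [ContinuousWithinAt, h0] at hc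
  refine hc.comp ?_
  rw [tendsto_nhdsWithin_iff]
  constructor
  · exact tendsto_one_div_add_atTop_nhds_zero_nat.congr (by intro n; rw [one_div])
  · exact Filter.Eventually.of_forall fun n => Set.mem_Ici.2 (by positivity)

end DPG

namespace DPG

variable {X Y Z : Type*} [NormedAddCommGroup X] [NormedSpace ℂ X] [CompleteSpace X]
  [NormedAddCommGroup Y] [NormedSpace ℂ Y]
  [AddCommGroup Z] [Module ℂ Z] [TopologicalSpace Z] [T2Space Z]
  (E : DPG X Y Z)

lemma haarScale_ae_pos : ∀ᵐ t ∂haarScale, 0 < t := by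
  have h1 : ∀ᵐ t ∂(MeasureTheory.volume.restrict (Set.Ioi (0:ℝ))), 0 < t :=
    (ae_restrict_iff' measurableSet_Ioi).2 (Filter.Eventually.of_forall fun t ht => ht)
  exact (withDensity_absolutelyContinuous _ _).ae_le h1

lemma part1 {q : ℝ≥0∞} (hq1 : 1 ≤ q) (hqt : q ≠ ⊤) {θ : ℝ} (hθ0 : 0 < θ) (hθ1 : θ < 1)
    (x : X) (hx : E.memDA θ q x) {ε : ℝ} (hε : 0 < ε) :
    ∃ w : E.dom, E.inhomNorm θ q (x - (w : X)) < ENNReal.ofReal ε := by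
  obtain ⟨hmeas, hfin⟩ := hx
  have hq0 : q ≠ 0 := by rintro rfl; simp at hq1
  set p := q.toReal with hp
  have hp1 : 1 ≤ p := by
    have := ENNReal.toReal_mono hqt hq1
    simpa using this
  have hp0 : 0 < p := lt_of_lt_of_le one_pos hp1
  set H : ℝ → X := fun s => s ^ (1 - θ) • E.Afun (E.S s x) with hH
  have hhom : E.homNormX θ q x = (∫⁻ s, (‖H s‖₊ : ℝ≥0∞) ^ p ∂haarScale) ^ (1/p) := by
    rw [homNormX]
    exact eLpNorm_eq_lintegral_rpow_enorm_toReal hq0 hqt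
  have hIfin : ∫⁻ s, (‖H s‖₊ : ℝ≥0∞) ^ p ∂haarScale ≠ ⊤ := by
    intro hcon
    rw [hhom, hcon, ENNReal.top_rpow_of_pos (by positivity)] at hfin
    exact (lt_irrefl _) hfin
  set T : ℕ → ℝ := fun n => ((n : ℝ) + 1)⁻¹ with hT
  have hTpos : ∀ n, 0 < T n := fun n => by positivity
  set G : ℕ → ℝ → X := fun n s => H s - E.S (T n) (H s) with hG
  -- Claim A
  have claimA : ∀ n, E.homNormX θ q (x - E.S (T n) x) = eLpNorm (G n) q haarScale := by
    intro n
    rw [homNormX]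
    refine eLpNorm_congr_ae ?_
    filter_upwards [haarScale_ae_pos] with s hs
    rw [E.part1_pointwise x hs (hTpos n).le, smul_sub]
    rw [hG]
    simp only [hH]
    rw [(E.S (T n)).map_smul_of_tower]
  -- measurability
  have hGm : ∀ n, AEStronglyMeasurable (G n) haarScale := fun n =>
    hmeas.sub ((E.S (T n)).continuous.comp_aestronglyMeasurable hmeas)
  -- pointwise norm bound
  have hM : ∀ (t : ℝ) (v : X), 0 ≤ t → ‖E.S t v‖ ≤ E.M₀ * ‖v‖ := fun t v ht =>
    le_trans ((E.S t).le_opNorm v) (by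
      have := E.S_bdd t ht
      have := norm_nonneg v
      nlinarith)
  have hbound : ∀ n s, (‖G n s‖₊ : ℝ≥0∞) ≤ ENNReal.ofReal (1 + E.M₀) * (‖H s‖₊ : ℝ≥0∞) := by
    intro n s
    have hreal : ‖G n s‖ ≤ (1 + E.M₀) * ‖H s‖ := by
      calc ‖H s - E.S (T n) (H s)‖ ≤ ‖H s‖ + ‖E.S (T n) (H s)‖ := norm_sub_le _ _
        _ ≤ ‖H s‖ + E.M₀ * ‖H s‖ := by
            have := hM (T n) (H s) (hTpos n).le; linarith
        _ = (1 + E.M₀) * ‖H s‖ := by ring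
    rw [← enorm_eq_nnnorm, ← enorm_eq_nnnorm, ← ofReal_norm, ← ofReal_norm,
      ← ENNReal.ofReal_mul (by have := E.M₀_nonneg; linarith)]
    exact ENNReal.ofReal_le_ofReal hreal
  -- Claim B : dominated convergence
  have claimB : Filter.Tendsto (fun n => ∫⁻ s, (‖G n s‖₊ : ℝ≥0∞) ^ p ∂haarScale)
      Filter.atTop (nhds 0) := by
    have h0 : (0 : ℝ≥0∞) = ∫⁻ (_ : ℝ), (fun _ => (0:ℝ≥0∞)) 0 ∂haarScale := by
      simp
    rw [show (nhds (0:ℝ≥0∞)) = nhds (∫⁻ s, (fun _ => (0:ℝ≥0∞)) s ∂haarScale) by simp]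
    refine tendsto_lintegral_of_dominated_convergence'
      (fun s => (ENNReal.ofReal (1 + E.M₀)) ^ p * (‖H s‖₊ : ℝ≥0∞) ^ p) ?_ ?_ ?_ ?_
    · intro n
      exact (ENNReal.continuous_rpow_const.measurable).comp_aemeasurable (hGm n).enorm
    · intro n
      refine Filter.Eventually.of_forall fun s => ?_
      calc (‖G n s‖₊ : ℝ≥0∞) ^ p ≤ (ENNReal.ofReal (1 + E.M₀) * (‖H s‖₊ : ℝ≥0∞)) ^ p :=
            ENNReal.rpow_le_rpow (hbound n s) hp0.le
        _ = _ := ENNReal.mul_rpow_of_nonneg _ _ hp0.le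
    · have hc : (ENNReal.ofReal (1 + E.M₀)) ^ p ≠ ⊤ :=
        (ENNReal.rpow_lt_top_of_nonneg hp0.le ENNReal.ofReal_ne_top).ne
      rw [lintegral_const_mul' _ _ hc]
      exact ENNReal.mul_ne_top hc hIfin
    · refine Filter.Eventually.of_forall fun s => ?_
      have h1 : Filter.Tendsto (fun n => G n s) Filter.atTop (nhds 0) := by
        have := E.S_tendsto_zero (H s)
        have h2 := Filter.Tendsto.sub (tendsto_const_nhds (x := H s)) this
        simpa using h2
      have h2 : Filter.Tendsto (fun n => ‖G n s‖) Filter.atTop (nhds 0) := by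
        simpa using h1.norm
      have h3 : Filter.Tendsto (fun n => ‖G n s‖ ^ p) Filter.atTop (nhds 0) := by
        have := h2.rpow_const (p := p) (Or.inr hp0.le)
        simpa [Real.zero_rpow hp0.ne'] using this
      have h4 : Filter.Tendsto (fun n => ENNReal.ofReal (‖G n s‖ ^ p)) Filter.atTop
          (nhds 0) := by
        simpa using (ENNReal.tendsto_ofReal h3)
      refine h4.congr fun n => ?_
      rw [← enorm_eq_nnnorm, ← ofReal_norm,
        ENNReal.ofReal_rpow_of_nonneg (norm_nonneg _) hp0.le]
  -- Claim C
  have claimC : Filter.Tendsto (fun n => E.homNormX θ q (x - E.S (T n) x))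
      Filter.atTop (nhds 0) := by
    have h1 : ∀ n, E.homNormX θ q (x - E.S (T n) x)
        = (∫⁻ s, (‖G n s‖₊ : ℝ≥0∞) ^ p ∂haarScale) ^ (1/p) := by
      intro n
      rw [claimA n, eLpNorm_eq_lintegral_rpow_enorm_toReal hq0 hqt]; rfl
    simp only [h1]
    have := (ENNReal.continuous_rpow_const (y := 1/p)).tendsto 0
    have h2 := this.comp claimB
    simpa [Function.comp_def, one_div, ENNReal.zero_rpow_of_pos (by positivity : 0 < p⁻¹)] using h2
  -- norm part
  have claimD : Filter.Tendsto (fun n => ENNReal.ofReal ‖x - E.S (T n) x‖)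
      Filter.atTop (nhds 0) := by
    have h1 : Filter.Tendsto (fun n => x - E.S (T n) x) Filter.atTop (nhds 0) := by
      have := E.S_tendsto_zero x
      simpa using (Filter.Tendsto.sub (tendsto_const_nhds (x := x)) this)
    have h2 := ENNReal.tendsto_ofReal (by simpa using h1.norm : Filter.Tendsto (fun n => ‖x - E.S (T n) x‖) Filter.atTop (nhds 0))
    rw [ENNReal.ofReal_zero] at h2
    exact h2
  have htot : Filter.Tendsto (fun n => E.inhomNorm θ q (x - E.S (T n) x))
      Filter.atTop (nhds 0) := by
    have := claimD.add claimC
    simpa [inhomNorm] using this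
  have hev := htot.eventually_lt_const (ENNReal.ofReal_pos.2 hε)
  obtain ⟨n, hn⟩ := hev.exists
  exact ⟨⟨E.S (T n) x, E.S_smoothing (T n) (hTpos n) x⟩, hn⟩

end DPG

namespace DPG

variable {X Y Z : Type*} [NormedAddCommGroup X] [NormedSpace ℂ X] [CompleteSpace X]
  [NormedAddCommGroup Y] [NormedSpace ℂ Y]
  [AddCommGroup Z] [Module ℂ Z] [TopologicalSpace Z] [T2Space Z]
  (E : DPG X Y Z)

lemma adot_ex {y : Y} (hy : y ∈ E.DdotA) :
    ∃ L : X, ∃ u : ℕ → E.dom, Filter.Tendsto (fun n => E.jY (u n)) Filter.atTop (nhds y) ∧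
      Filter.Tendsto (fun n => E.Aop (u n)) Filter.atTop (nhds L) := by
  obtain ⟨u, hu⟩ := hy
  have hcY : CauchySeq (fun n => E.jY (u n)) := hu.cauchySeq
  have hcX : CauchySeq (fun n => E.Aop (u n)) := by
    rw [Metric.cauchySeq_iff] at hcY ⊢
    intro ε hε
    obtain ⟨N, hN⟩ := hcY (E.C₁ * ε) (mul_pos E.C₁_pos hε)
    refine ⟨N, fun m hm n hn => ?_⟩
    have h1 := hN m hm n hn
    have h2 : dist (E.Aop (u m)) (E.Aop (u n)) = ‖E.Aop (u m - u n)‖ := by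
      rw [dist_eq_norm, ← map_sub]
    have h3 : dist (E.jY (u m)) (E.jY (u n)) = ‖E.jY (u m - u n)‖ := by
      rw [dist_eq_norm, ← map_sub]
    have h4 := E.normY_lower (u m - u n)
    rw [h2]; rw [h3] at h1
    have hC := E.C₁_pos
    nlinarith
  obtain ⟨L, hL⟩ := cauchySeq_tendsto_of_complete hcX
  exact ⟨L, u, hu, hL⟩

lemma adot_spec {y : Y} (hy : y ∈ E.DdotA) : ∃ u : ℕ → E.dom,
    Filter.Tendsto (fun n => E.jY (u n)) Filter.atTop (nhds y) ∧
      Filter.Tendsto (fun n => E.Aop (u n)) Filter.atTop (nhds (E.Adot y)) :=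
  Classical.epsilon_spec_aux ⟨0⟩
    (fun L => ∃ u : ℕ → E.dom, Filter.Tendsto (fun n => E.jY (u n)) Filter.atTop (nhds y) ∧
      Filter.Tendsto (fun n => E.Aop (u n)) Filter.atTop (nhds L)) (E.adot_ex hy)

lemma tendsto_Aop_of {y : Y} (hy : y ∈ E.DdotA) {u : ℕ → E.dom}
    (hu : Filter.Tendsto (fun n => E.jY (u n)) Filter.atTop (nhds y)) :
    Filter.Tendsto (fun n => E.Aop (u n)) Filter.atTop (nhds (E.Adot y)) := by
  obtain ⟨v, hv1, hv2⟩ := E.adot_spec hy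
  have hY : Filter.Tendsto (fun n => ‖E.jY (u n) - E.jY (v n)‖) Filter.atTop (nhds 0) := by
    simpa using (hu.sub hv1).norm
  have hdiff : Filter.Tendsto (fun n => E.Aop (u n) - E.Aop (v n)) Filter.atTop (nhds 0) := by
    refine squeeze_zero_norm (fun n => ?_) (by simpa using hY.const_mul E.C₁⁻¹)
    have h4 := E.normY_lower (u n - v n)
    have hC := E.C₁_pos
    rw [← map_sub, ← map_sub, inv_mul_eq_div, le_div_iff₀ hC]
    nlinarith
  have := hdiff.add hv2
  simpa using this

lemma jY_mem_DdotA (w : E.dom) : E.jY w ∈ E.DdotA := ⟨fun _ => w, tendsto_const_nhds⟩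

lemma Adot_jY (w : E.dom) : E.Adot (E.jY w) = E.Aop w :=
  tendsto_nhds_unique
    (E.tendsto_Aop_of (E.jY_mem_DdotA w) (u := fun _ => w) tendsto_const_nhds)
    tendsto_const_nhds

lemma DdotA_sub {y₁ y₂ : Y} (h₁ : y₁ ∈ E.DdotA) (h₂ : y₂ ∈ E.DdotA) :
    y₁ - y₂ ∈ E.DdotA ∧ E.Adot (y₁ - y₂) = E.Adot y₁ - E.Adot y₂ := by
  obtain ⟨u, hu1, hu2⟩ := E.adot_spec h₁
  obtain ⟨v, hv1, hv2⟩ := E.adot_spec h₂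
  have hmem : y₁ - y₂ ∈ E.DdotA := by
    refine ⟨fun n => u n - v n, ?_⟩
    have := hu1.sub hv1
    simpa [map_sub] using this
  refine ⟨hmem, ?_⟩
  have h5 : Filter.Tendsto (fun n => E.Aop (u n - v n)) Filter.atTop
      (nhds (E.Adot (y₁ - y₂))) := by
    refine E.tendsto_Aop_of hmem ?_
    have := hu1.sub hv1
    simpa [map_sub] using this
  have h6 : Filter.Tendsto (fun n => E.Aop (u n - v n)) Filter.atTop
      (nhds (E.Adot y₁ - E.Adot y₂)) := by
    have := hu2.sub hv2
    simpa [map_sub] using this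
  exact tendsto_nhds_unique h5 h6

lemma Kfun_le (t : ℝ) {z : Z} {x : X} {y : Y} (hy : y ∈ E.DdotA)
    (heq : E.ιX x + E.ιY y = z) :
    E.Kfun t z ≤ ENNReal.ofReal (‖x‖ + t * ‖E.Adot y‖) := by
  unfold Kfun
  exact iInf_le_of_le x (iInf_le_of_le y (iInf_le_of_le hy (iInf_le_of_le heq le_rfl)))

lemma Kfun_mono (z : Z) : Monotone (fun t => E.Kfun t z) := by
  intro a b hab
  unfold Kfun
  refine iInf_mono fun x => iInf_mono fun y => iInf_mono fun hy => iInf_mono fun heq => ?_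
  exact ENNReal.ofReal_le_ofReal
    (add_le_add_right (mul_le_mul_of_nonneg_right hab (norm_nonneg _)) _)

lemma Kfun_measurable (z : Z) : Measurable (fun t => E.Kfun t z) :=
  (E.Kfun_mono z).measurable

lemma Kfun_sub_le₁ {t : ℝ} (ht : 0 ≤ t) (w : E.dom) (z : Z) :
    E.Kfun t (z - E.ιX w) ≤ E.Kfun t z + ENNReal.ofReal (t * ‖E.Aop w‖) := by
  conv_rhs => rw [Kfun]
  rw [ENNReal.iInf_add]; refine le_iInf fun x => ?_
  rw [ENNReal.iInf_add]; refine le_iInf fun y => ?_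
  rw [ENNReal.iInf_add]; refine le_iInf fun hy => ?_
  rw [ENNReal.iInf_add]; refine le_iInf fun heq => ?_
  have hy' : y - E.jY w ∈ E.DdotA := (E.DdotA_sub hy (E.jY_mem_DdotA w)).1
  have heq' : E.ιX x + E.ιY (y - E.jY w) = z - E.ιX w := by
    rw [map_sub, ← E.j_compat w, ← heq]; abel
  refine le_trans (E.Kfun_le t hy' heq') ?_
  rw [(E.DdotA_sub hy (E.jY_mem_DdotA w)).2, E.Adot_jY]
  refine le_trans (ENNReal.ofReal_le_ofReal ?_) ENNReal.ofReal_add_le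
  have h1 : ‖E.Adot y - E.Aop w‖ ≤ ‖E.Adot y‖ + ‖E.Aop w‖ := norm_sub_le _ _
  have h2 : t * ‖E.Adot y - E.Aop w‖ ≤ t * (‖E.Adot y‖ + ‖E.Aop w‖) :=
    mul_le_mul_of_nonneg_left h1 ht
  nlinarith

lemma Kfun_sub_le₂ (t : ℝ) (w : E.dom) (z : Z) :
    E.Kfun t (z - E.ιX w) ≤ E.Kfun t z + ENNReal.ofReal ‖(w : X)‖ := by
  conv_rhs => rw [Kfun]
  rw [ENNReal.iInf_add]; refine le_iInf fun x => ?_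
  rw [ENNReal.iInf_add]; refine le_iInf fun y => ?_
  rw [ENNReal.iInf_add]; refine le_iInf fun hy => ?_
  rw [ENNReal.iInf_add]; refine le_iInf fun heq => ?_
  have heq' : E.ιX (x - (w : X)) + E.ιY y = z - E.ιX w := by
    rw [map_sub, ← heq]; abel
  refine le_trans (E.Kfun_le t hy heq') ?_
  refine le_trans (ENNReal.ofReal_le_ofReal ?_) ENNReal.ofReal_add_le
  have h1 : ‖x - (w : X)‖ ≤ ‖x‖ + ‖(w : X)‖ := norm_sub_le _ _
  linarith

end DPG

lemma tendsto_lowtail {G : ℝ → ℝ≥0∞} (hm : Measurable G)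
    (hfin : ∫⁻ r, G r ∂haarScale ≠ ⊤) :
    Filter.Tendsto (fun n : ℕ => ∫⁻ r in Set.Ioc 0 (((n:ℝ)+1)⁻¹), G r ∂haarScale)
      Filter.atTop (nhds 0) := by
  have heq : ∀ n : ℕ, ∫⁻ r in Set.Ioc 0 (((n:ℝ)+1)⁻¹), G r ∂haarScale
      = ∫⁻ r, (Set.Ioc (0:ℝ) (((n:ℝ)+1)⁻¹)).indicator G r ∂haarScale := fun n =>
    (lintegral_indicator measurableSet_Ioc G).symm
  simp only [heq]
  have h0 : (0:ℝ≥0∞) = ∫⁻ r, (fun _ => (0:ℝ≥0∞)) r ∂haarScale := by simp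
  rw [h0]
  refine tendsto_lintegral_of_dominated_convergence G
    (fun n => hm.indicator measurableSet_Ioc)
    (fun n => Filter.Eventually.of_forall fun r => Set.indicator_le_self _ _ _) hfin ?_
  filter_upwards [DPG.haarScale_ae_pos] with r hr
  obtain ⟨N, hN⟩ := exists_nat_gt r⁻¹
  refine tendsto_const_nhds.congr' ?_
  filter_upwards [Filter.eventually_ge_atTop N] with n hn
  symm
  apply Set.indicator_of_notMem
  intro hmem
  have h1 : ((n:ℝ)+1)⁻¹ < r := by
    have hnN : (N:ℝ) ≤ (n:ℝ) := Nat.cast_le.2 hn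
    have h2 : r⁻¹ < (n:ℝ)+1 := lt_of_lt_of_le hN (by linarith)
    exact (inv_lt_comm₀ (by positivity) hr).2 h2
  exact absurd hmem.2 (not_le.2 h1)

lemma tendsto_uptail {G : ℝ → ℝ≥0∞} (hm : Measurable G)
    (hfin : ∫⁻ r, G r ∂haarScale ≠ ⊤) :
    Filter.Tendsto (fun n : ℕ => ∫⁻ r in Set.Ioi ((n:ℝ)+1), G r ∂haarScale)
      Filter.atTop (nhds 0) := by
  have heq : ∀ n : ℕ, ∫⁻ r in Set.Ioi ((n:ℝ)+1), G r ∂haarScale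
      = ∫⁻ r, (Set.Ioi ((n:ℝ)+1)).indicator G r ∂haarScale := fun n =>
    (lintegral_indicator measurableSet_Ioi G).symm
  simp only [heq]
  have h0 : (0:ℝ≥0∞) = ∫⁻ r, (fun _ => (0:ℝ≥0∞)) r ∂haarScale := by simp
  rw [h0]
  refine tendsto_lintegral_of_dominated_convergence G
    (fun n => hm.indicator measurableSet_Ioi)
    (fun n => Filter.Eventually.of_forall fun r => Set.indicator_le_self _ _ _) hfin ?_
  refine Filter.Eventually.of_forall fun r => ?_
  obtain ⟨N, hN⟩ := exists_nat_gt r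
  refine tendsto_const_nhds.congr' ?_
  filter_upwards [Filter.eventually_ge_atTop N] with n hn
  symm
  apply Set.indicator_of_notMem
  intro hmem
  have : r ≤ (n:ℝ)+1 := by
    have hnN : (N:ℝ) ≤ (n:ℝ) := Nat.cast_le.2 hn
    linarith
  exact absurd (Set.mem_Ioi.1 hmem) (not_lt.2 this)

namespace DPG

variable {X Y Z : Type*} [NormedAddCommGroup X] [NormedSpace ℂ X] [CompleteSpace X]
  [NormedAddCommGroup Y] [NormedSpace ℂ Y]
  [AddCommGroup Z] [Module ℂ Z] [TopologicalSpace Z] [T2Space Z]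
  (E : DPG X Y Z)

lemma exists_scale_in {z : Z} {θ p η : ℝ} (hη : 0 < η) (hp0 : 0 < p)
    (hfin : ∫⁻ r, (ENNReal.ofReal (r ^ (-θ)) * E.Kfun r z) ^ p ∂haarScale ≠ ⊤)
    {A : Set ℝ} (hAm : MeasurableSet A) (hA : A ⊆ Set.Ioi 0) (hAtop : haarScale A = ⊤) :
    ∃ s ∈ A, E.Kfun s z < ENNReal.ofReal (η * s ^ θ) := by
  by_contra h
  push_neg at h
  have hlb : ∀ r ∈ A, ENNReal.ofReal η ^ p ≤ (ENNReal.ofReal (r ^ (-θ)) * E.Kfun r z) ^ p := by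
    intro r hr
    have hr0 : (0:ℝ) < r := hA hr
    refine ENNReal.rpow_le_rpow ?_ hp0.le
    have h2 : ENNReal.ofReal η = ENNReal.ofReal (r ^ (-θ)) * ENNReal.ofReal (η * r ^ θ) := by
      rw [← ENNReal.ofReal_mul (Real.rpow_nonneg hr0.le _)]
      congr 1
      rw [show r ^ (-θ) * (η * r ^ θ) = η * (r ^ (-θ) * r ^ θ) by ring,
        ← Real.rpow_add hr0, neg_add_cancel, Real.rpow_zero, mul_one]
    rw [h2]
    exact mul_le_mul_right (h r hr) _
  have htop : (⊤:ℝ≥0∞) ≤ ∫⁻ r, (ENNReal.ofReal (r ^ (-θ)) * E.Kfun r z) ^ p ∂haarScale := by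
    calc (⊤:ℝ≥0∞) = ENNReal.ofReal η ^ p * haarScale A := by
          rw [hAtop, ENNReal.mul_top
            (ENNReal.rpow_pos (ENNReal.ofReal_pos.2 hη) ENNReal.ofReal_ne_top).ne']
      _ = ∫⁻ _ in A, ENNReal.ofReal η ^ p ∂haarScale := (setLIntegral_const A _).symm
      _ ≤ ∫⁻ r in A, (ENNReal.ofReal (r ^ (-θ)) * E.Kfun r z) ^ p ∂haarScale := by
          refine lintegral_mono_ae ?_
          rw [ae_restrict_iff' hAm]
          exact Filter.Eventually.of_forall hlb
      _ ≤ _ := setLIntegral_le_lintegral _ _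
  exact hfin (top_le_iff.1 htop)

end DPG

lemma combine_ofReal_pow {r θc c : ℝ} (hr : 0 < r) (hc : 0 ≤ c) :
    ENNReal.ofReal (r ^ (-θc)) * ENNReal.ofReal (r * c)
      = ENNReal.ofReal (r ^ (1 - θc)) * ENNReal.ofReal c := by
  rw [← ENNReal.ofReal_mul (Real.rpow_nonneg hr.le _),
    ← ENNReal.ofReal_mul (Real.rpow_nonneg hr.le _)]
  congr 1
  rw [show (1 - θc) = -θc + 1 by ring, Real.rpow_add hr, Real.rpow_one]
  ring

lemma ofReal_mul_rpow {r a b p : ℝ} (hr : 0 < r) (hb : 0 ≤ b) (hp : 0 ≤ p) :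
    (ENNReal.ofReal (r ^ a) * ENNReal.ofReal b) ^ p
      = ENNReal.ofReal (r ^ (a * p)) * ENNReal.ofReal (b ^ p) := by
  rw [← ENNReal.ofReal_mul (Real.rpow_nonneg hr.le _),
    ENNReal.ofReal_rpow_of_nonneg (mul_nonneg (Real.rpow_nonneg hr.le _) hb) hp,
    Real.mul_rpow (Real.rpow_nonneg hr.le _) hb, ← Real.rpow_mul hr.le,
    ENNReal.ofReal_mul (Real.rpow_nonneg hr.le _)]

lemma piece_Ioc {p θ η ρ c u : ℝ} (hu : 0 < u) (hp : 0 < p) (hθ1 : θ < 1) (hη : 0 ≤ η)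
    (hc : 0 ≤ c) (hcb : c ≤ 2 * η * u ^ (θ - 1))
    (hρ : 2 ^ p * η ^ p / ((1 - θ) * p) ≤ ρ) :
    (∫⁻ r in Set.Ioc 0 u, ENNReal.ofReal (r ^ ((1 - θ) * p)) ∂haarScale)
      * ENNReal.ofReal (c ^ p) ≤ ENNReal.ofReal ρ := by
  have hq1θ : (0:ℝ) < (1 - θ) * p := by nlinarith
  rw [lintegral_haar_Ioc_rpow hq1θ hu, ← ENNReal.ofReal_mul
    (le_of_lt (div_pos (Real.rpow_pos_of_pos hu _) hq1θ))]
  apply ENNReal.ofReal_le_ofReal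
  have h1 : c ^ p ≤ 2 ^ p * η ^ p * u ^ ((θ - 1) * p) := by
    calc c ^ p ≤ (2 * η * u ^ (θ - 1)) ^ p := Real.rpow_le_rpow hc hcb hp.le
      _ = (2 * η) ^ p * (u ^ (θ - 1)) ^ p :=
          Real.mul_rpow (by positivity) (Real.rpow_nonneg hu.le _)
      _ = 2 ^ p * η ^ p * u ^ ((θ - 1) * p) := by
          rw [← Real.rpow_mul hu.le, Real.mul_rpow (by norm_num) hη]
  have h2 : u ^ ((1 - θ) * p) * u ^ ((θ - 1) * p) = 1 := by
    rw [← Real.rpow_add hu, show (1 - θ) * p + (θ - 1) * p = 0 by ring, Real.rpow_zero]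
  calc u ^ ((1 - θ) * p) / ((1 - θ) * p) * c ^ p
      ≤ u ^ ((1 - θ) * p) / ((1 - θ) * p) * (2 ^ p * η ^ p * u ^ ((θ - 1) * p)) :=
        mul_le_mul_of_nonneg_left h1 (le_of_lt (div_pos (Real.rpow_pos_of_pos hu _) hq1θ))
    _ = 2 ^ p * η ^ p / ((1 - θ) * p) * (u ^ ((1 - θ) * p) * u ^ ((θ - 1) * p)) := by ring
    _ = 2 ^ p * η ^ p / ((1 - θ) * p) := by rw [h2, mul_one]
    _ ≤ ρ := hρ

lemma piece_Ioi {p θ η ρ c u : ℝ} (hu : 0 < u) (hp : 0 < p) (hθ0 : 0 < θ) (hη : 0 ≤ η)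
    (hc : 0 ≤ c) (hcb : c ≤ 2 * η * u ^ θ)
    (hρ : 2 ^ p * η ^ p / (θ * p) ≤ ρ) :
    (∫⁻ r in Set.Ioi u, ENNReal.ofReal (r ^ (-θ * p)) ∂haarScale)
      * ENNReal.ofReal (c ^ p) ≤ ENNReal.ofReal ρ := by
  have he : ∀ r : ℝ, r ^ (-θ * p) = r ^ (-(θ * p)) := fun r => by ring_nf
  simp only [he]
  rw [lintegral_haar_Ioi_rpow (mul_pos hθ0 hp) hu, ← ENNReal.ofReal_mul (le_of_lt (div_pos (Real.rpow_pos_of_pos hu _) (mul_pos hθ0 hp)))]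
  apply ENNReal.ofReal_le_ofReal
  have h1 : c ^ p ≤ 2 ^ p * η ^ p * u ^ (θ * p) := by
    calc c ^ p ≤ (2 * η * u ^ θ) ^ p := Real.rpow_le_rpow hc hcb hp.le
      _ = (2 * η) ^ p * (u ^ θ) ^ p :=
          Real.mul_rpow (by positivity) (Real.rpow_nonneg hu.le _)
      _ = 2 ^ p * η ^ p * u ^ (θ * p) := by
          rw [← Real.rpow_mul hu.le, Real.mul_rpow (by norm_num) hη]
  have h2 : u ^ (-(θ * p)) * u ^ (θ * p) = 1 := by
    rw [← Real.rpow_add hu, neg_add_cancel, Real.rpow_zero]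
  calc u ^ (-(θ * p)) / (θ * p) * c ^ p
      ≤ u ^ (-(θ * p)) / (θ * p) * (2 ^ p * η ^ p * u ^ (θ * p)) :=
        mul_le_mul_of_nonneg_left h1 (le_of_lt (div_pos (Real.rpow_pos_of_pos hu _) (mul_pos hθ0 hp)))
    _ = 2 ^ p * η ^ p / (θ * p) * (u ^ (-(θ * p)) * u ^ (θ * p)) := by ring
    _ = 2 ^ p * η ^ p / (θ * p) := by rw [h2, mul_one]
    _ ≤ ρ := hρ

namespace DPG

variable {X Y Z : Type*} [NormedAddCommGroup X] [NormedSpace ℂ X] [CompleteSpace X]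
  [NormedAddCommGroup Y] [NormedSpace ℂ Y]
  [AddCommGroup Z] [Module ℂ Z] [TopologicalSpace Z] [T2Space Z]
  (E : DPG X Y Z)

set_option maxHeartbeats 2000000 in
lemma part2 {q : ℝ≥0∞} (hq1 : 1 ≤ q) (hqt : q ≠ ⊤) {θ : ℝ} (hθ0 : 0 < θ) (hθ1 : θ < 1)
    (z : Z) (hfin : E.interpNorm θ q z < ⊤) {ε : ℝ} (hε : 0 < ε) :
    ∃ w : E.dom, E.interpNorm θ q (z - E.ιX (w : X)) < ENNReal.ofReal ε := by
  have hq0 : q ≠ 0 := by rintro rfl; simp at hq1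
  set p := q.toReal with hpdef
  have hp1 : 1 ≤ p := by have := ENNReal.toReal_mono hqt hq1; simpa using this
  have hp0 : 0 < p := lt_of_lt_of_le one_pos hp1
  have h2pR : (0:ℝ) < 2 ^ p := Real.rpow_pos_of_pos two_pos p
  have hθp : (0:ℝ) < θ * p := mul_pos hθ0 hp0
  have hθp' : (0:ℝ) < (1 - θ) * p := mul_pos (by linarith) hp0
  have hinterp : ∀ ζ : Z, E.interpNorm θ q ζ
      = (∫⁻ r, (ENNReal.ofReal (r ^ (-θ)) * E.Kfun r ζ) ^ p ∂haarScale) ^ (1/p) := by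
    intro ζ; rw [interpNorm, lqNorm, if_neg hqt]
  have hoR : Measurable fun r : ℝ => ENNReal.ofReal (r ^ (-θ)) := by fun_prop
  have hGzm : Measurable fun r : ℝ => (ENNReal.ofReal (r ^ (-θ)) * E.Kfun r z) ^ p :=
    (ENNReal.continuous_rpow_const.measurable).comp (hoR.mul (E.Kfun_measurable z))
  have hItot : ∫⁻ r, (ENNReal.ofReal (r ^ (-θ)) * E.Kfun r z) ^ p ∂haarScale ≠ ⊤ := by
    intro hcon
    rw [hinterp z, hcon, ENNReal.top_rpow_of_pos (by positivity)] at hfin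
    exact lt_irrefl _ hfin
  -- constants
  have hεp : 0 < ε ^ p := Real.rpow_pos_of_pos hε p
  set ρ : ℝ := ε ^ p / (24 * 2 ^ p) with hρdef
  have hρ0 : 0 < ρ := div_pos hεp (by positivity)
  set Cr : ℝ := 2 ^ p / (θ * p) + 2 ^ p / ((1 - θ) * p) with hCrdef
  have hCr0 : 0 < Cr := add_pos (div_pos h2pR hθp) (div_pos h2pR hθp')
  set η : ℝ := min 1 ((ρ / (Cr + 1)) ^ p⁻¹) with hηdef
  have hρC : 0 < ρ / (Cr + 1) := div_pos hρ0 (by linarith)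
  have hη0 : 0 < η := lt_min one_pos (Real.rpow_pos_of_pos hρC _)
  have hηb : η ^ p * Cr ≤ ρ := by
    have h1 : η ^ p ≤ ρ / (Cr + 1) := by
      calc η ^ p ≤ ((ρ / (Cr + 1)) ^ p⁻¹) ^ p :=
            Real.rpow_le_rpow hη0.le (min_le_right _ _) hp0.le
        _ = ρ / (Cr + 1) := by
            rw [← Real.rpow_mul hρC.le, inv_mul_cancel₀ hp0.ne', Real.rpow_one]
    have h2 : η ^ p * (Cr + 1) ≤ ρ := by
      rw [← le_div_iff₀ (by linarith)]; exact h1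
    nlinarith [Real.rpow_nonneg hη0.le p]
  have hρ1 : 2 ^ p * η ^ p / ((1 - θ) * p) ≤ ρ := by
    have h1 : 2 ^ p * η ^ p / ((1 - θ) * p) = η ^ p * (2 ^ p / ((1 - θ) * p)) := by ring
    have h2 : 2 ^ p / ((1 - θ) * p) ≤ Cr := by
      rw [hCrdef]; have := div_pos h2pR hθp; linarith
    rw [h1]
    calc η ^ p * (2 ^ p / ((1 - θ) * p)) ≤ η ^ p * Cr :=
          mul_le_mul_of_nonneg_left h2 (Real.rpow_nonneg hη0.le p)
      _ ≤ ρ := hηb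
  have hρ2 : 2 ^ p * η ^ p / (θ * p) ≤ ρ := by
    have h1 : 2 ^ p * η ^ p / (θ * p) = η ^ p * (2 ^ p / (θ * p)) := by ring
    have h2 : 2 ^ p / (θ * p) ≤ Cr := by
      rw [hCrdef]; have := div_pos h2pR hθp'; linarith
    rw [h1]
    calc η ^ p * (2 ^ p / (θ * p)) ≤ η ^ p * Cr :=
          mul_le_mul_of_nonneg_left h2 (Real.rpow_nonneg hη0.le p)
      _ ≤ ρ := hηb
  clear_value ρ Cr η
  -- tails
  obtain ⟨n₁, hn₁⟩ := ((tendsto_lowtail hGzm hItot).eventually_lt_const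
    (ENNReal.ofReal_pos.2 hρ0)).exists
  obtain ⟨n₂, hn₂⟩ := ((tendsto_uptail hGzm hItot).eventually_lt_const
    (ENNReal.ofReal_pos.2 hρ0)).exists
  -- scales
  have hc1 : (0:ℝ) < ((n₁:ℝ)+1)⁻¹ := by positivity
  obtain ⟨s, hsmem, hKs⟩ := E.exists_scale_in (z := z) hη0 hp0 hItot measurableSet_Ioc
    (fun r hr => hr.1) (haarScale_Ioc_top hc1)
  have hs0 : 0 < s := hsmem.1
  have hs1 : s ≤ ((n₁:ℝ)+1)⁻¹ := hsmem.2
  have hc2 : (0:ℝ) < max ((n₂:ℝ)+1) s := lt_of_lt_of_le (by positivity) (le_max_left _ _)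
  obtain ⟨t, htmem, hKt⟩ := E.exists_scale_in (z := z) hη0 hp0 hItot measurableSet_Ioi
    (fun r hr => lt_trans hc2 hr) (haarScale_Ioi_top hc2)
  rw [Set.mem_Ioi] at htmem
  have hts : s < t := lt_of_le_of_lt (le_max_right _ _) htmem
  have ht0 : 0 < t := lt_trans hs0 hts
  have htn2 : ((n₂:ℝ)+1) ≤ t := le_of_lt (lt_of_le_of_lt (le_max_left _ _) htmem)
  -- decomposition at s
  unfold Kfun at hKs hKt
  simp only [iInf_lt_iff] at hKs hKt
  obtain ⟨xs, ys, hys, heqs, hvs⟩ := hKs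
  obtain ⟨xt, yt, hyt, heqt, hvt⟩ := hKt
  have hsθ : (0:ℝ) < s ^ θ := Real.rpow_pos_of_pos hs0 θ
  have htθ : (0:ℝ) < t ^ θ := Real.rpow_pos_of_pos ht0 θ
  have hvsR : ‖xs‖ + s * ‖E.Adot ys‖ < η * s ^ θ :=
    (ENNReal.ofReal_lt_ofReal_iff (mul_pos hη0 hsθ)).1 hvs
  have hvtR : ‖xt‖ + t * ‖E.Adot yt‖ < η * t ^ θ :=
    (ENNReal.ofReal_lt_ofReal_iff (mul_pos hη0 htθ)).1 hvt
  have hxs : ‖xs‖ ≤ η * s ^ θ := by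
    nlinarith [mul_nonneg hs0.le (norm_nonneg (E.Adot ys))]
  have hxt : ‖xt‖ ≤ η * t ^ θ := by
    nlinarith [mul_nonneg ht0.le (norm_nonneg (E.Adot yt))]
  have hAys : ‖E.Adot ys‖ ≤ η * s ^ (θ - 1) := by
    have h1 : ‖E.Adot ys‖ * s ≤ η * s ^ θ := by nlinarith [norm_nonneg xs]
    have h2 : η * s ^ (θ - 1) * s = η * s ^ θ := by
      rw [Real.rpow_sub hs0, Real.rpow_one]; field_simp
    exact (mul_le_mul_iff_of_pos_right hs0).1 (by rw [h2]; exact h1)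
  have hAyt : ‖E.Adot yt‖ ≤ η * t ^ (θ - 1) := by
    have h1 : ‖E.Adot yt‖ * t ≤ η * t ^ θ := by nlinarith [norm_nonneg xt]
    have h2 : η * t ^ (θ - 1) * t = η * t ^ θ := by
      rw [Real.rpow_sub ht0, Real.rpow_one]; field_simp
    exact (mul_le_mul_iff_of_pos_right ht0).1 (by rw [h2]; exact h1)
  -- the approximant w
  have hydm := E.DdotA_sub hys hyt
  have hwX : E.ιX (xt - xs) = E.ιY (ys - yt) := by
    have h := heqs.trans heqt.symm
    rw [map_sub, map_sub, sub_eq_sub_iff_add_eq_add, ← h]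
    exact add_comm _ _
  have hwmem : xt - xs ∈ E.dom := E.inter_sub _ _ hydm.1 hwX
  refine ⟨⟨xt - xs, hwmem⟩, ?_⟩
  set w : E.dom := (⟨xt - xs, hwmem⟩ : E.dom) with hwdef
  have hjYw : E.jY w = ys - yt := E.ιY_inj (by rw [← E.j_compat]; exact hwX)
  have hAw : E.Aop w = E.Adot ys - E.Adot yt := by rw [← E.Adot_jY w, hjYw]; exact hydm.2
  have htpow : t ^ (θ - 1) ≤ s ^ (θ - 1) :=
    Real.rpow_le_rpow_of_nonpos hs0 hts.le (by linarith)
  have hspow : s ^ θ ≤ t ^ θ := Real.rpow_le_rpow hs0.le hts.le hθ0.le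
  have hAwn : ‖E.Aop w‖ ≤ 2 * η * s ^ (θ - 1) := by
    rw [hAw]
    calc ‖E.Adot ys - E.Adot yt‖ ≤ ‖E.Adot ys‖ + ‖E.Adot yt‖ := norm_sub_le _ _
      _ ≤ η * s ^ (θ - 1) + η * t ^ (θ - 1) := add_le_add hAys hAyt
      _ ≤ 2 * η * s ^ (θ - 1) := by nlinarith
  have hwn : ‖(w : X)‖ ≤ 2 * η * t ^ θ := by
    calc ‖(w : X)‖ = ‖xt - xs‖ := rfl
      _ ≤ ‖xt‖ + ‖xs‖ := norm_sub_le _ _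
      _ ≤ η * t ^ θ + η * s ^ θ := add_le_add hxt hxs
      _ ≤ 2 * η * t ^ θ := by nlinarith
  set v : Z := z - E.ιX (w : X) with hvdef
  have heqv : E.ιX xs + E.ιY yt = v := by
    have h1 : E.ιX (w : X) = E.ιX xt - E.ιX xs := by
      rw [show ((w : X)) = xt - xs from rfl, map_sub]
    rw [hvdef, h1, ← heqt]; abel
  set Kv : ℝ → ℝ≥0∞ := fun r => (ENNReal.ofReal (r ^ (-θ)) * E.Kfun r v) ^ p with hKvdef
  have h2top : ((2:ℝ≥0∞)) ^ p ≠ ⊤ :=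
    (ENNReal.rpow_lt_top_of_nonneg hp0.le (by norm_num)).ne
  -- Region 1
  have hR1 : ∫⁻ r in Set.Ioc 0 s, Kv r ∂haarScale
      ≤ 2 ^ p * (ENNReal.ofReal ρ + ENNReal.ofReal ρ) := by
    have hpt : ∀ r ∈ Set.Ioc (0:ℝ) s, Kv r ≤ 2 ^ p *
        ((ENNReal.ofReal (r ^ (-θ)) * E.Kfun r z) ^ p
          + ENNReal.ofReal (r ^ ((1 - θ) * p)) * ENNReal.ofReal (‖E.Aop w‖ ^ p)) := by
      intro r hr
      have hr0 : (0:ℝ) < r := hr.1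
      calc Kv r ≤ (ENNReal.ofReal (r ^ (-θ))
            * (E.Kfun r z + ENNReal.ofReal (r * ‖E.Aop w‖))) ^ p :=
            ENNReal.rpow_le_rpow (mul_le_mul_right (E.Kfun_sub_le₁ hr0.le w z) _) hp0.le
        _ = (ENNReal.ofReal (r ^ (-θ)) * E.Kfun r z
              + ENNReal.ofReal (r ^ (-θ)) * ENNReal.ofReal (r * ‖E.Aop w‖)) ^ p := by
            rw [mul_add]
        _ ≤ 2 ^ p * ((ENNReal.ofReal (r ^ (-θ)) * E.Kfun r z) ^ p
              + (ENNReal.ofReal (r ^ (-θ)) * ENNReal.ofReal (r * ‖E.Aop w‖)) ^ p) :=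
            add_rpow_le_two_rpow_mul _ _ hp0.le
        _ = _ := by
            rw [combine_ofReal_pow hr0 (norm_nonneg _),
              ofReal_mul_rpow hr0 (norm_nonneg _) hp0.le]
    calc ∫⁻ r in Set.Ioc 0 s, Kv r ∂haarScale
        ≤ ∫⁻ r in Set.Ioc 0 s, 2 ^ p * ((ENNReal.ofReal (r ^ (-θ)) * E.Kfun r z) ^ p
            + ENNReal.ofReal (r ^ ((1 - θ) * p)) * ENNReal.ofReal (‖E.Aop w‖ ^ p)) ∂haarScale :=
          lintegral_mono_ae ((ae_restrict_iff' measurableSet_Ioc).2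
            (Filter.Eventually.of_forall hpt))
      _ = 2 ^ p * ((∫⁻ r in Set.Ioc 0 s,
              (ENNReal.ofReal (r ^ (-θ)) * E.Kfun r z) ^ p ∂haarScale)
            + (∫⁻ r in Set.Ioc 0 s, ENNReal.ofReal (r ^ ((1 - θ) * p)) ∂haarScale)
              * ENNReal.ofReal (‖E.Aop w‖ ^ p)) := by
          rw [lintegral_const_mul' _ _ h2top, lintegral_add_left hGzm,
            lintegral_mul_const' _ _ ENNReal.ofReal_ne_top]
      _ ≤ 2 ^ p * (ENNReal.ofReal ρ + ENNReal.ofReal ρ) := by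
          gcongr
          · exact le_of_lt (lt_of_le_of_lt
              (lintegral_mono_set (Set.Ioc_subset_Ioc_right hs1)) hn₁)
          · exact piece_Ioc hs0 hp0 hθ1 hη0.le (norm_nonneg _) hAwn hρ1
  -- Region 2
  have hR2 : ∫⁻ r in Set.Ioc s t, Kv r ∂haarScale
      ≤ 2 ^ p * (ENNReal.ofReal ρ + ENNReal.ofReal ρ) := by
    have hpt : ∀ r ∈ Set.Ioc s t, Kv r ≤ 2 ^ p *
        (ENNReal.ofReal (r ^ (-θ * p)) * ENNReal.ofReal (‖xs‖ ^ p)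
          + ENNReal.ofReal (r ^ ((1 - θ) * p)) * ENNReal.ofReal (‖E.Adot yt‖ ^ p)) := by
      intro r hr
      have hr0 : (0:ℝ) < r := lt_trans hs0 hr.1
      calc Kv r ≤ (ENNReal.ofReal (r ^ (-θ)) * (ENNReal.ofReal ‖xs‖
            + ENNReal.ofReal (r * ‖E.Adot yt‖))) ^ p := by
            refine ENNReal.rpow_le_rpow (mul_le_mul_right ?_ _) hp0.le
            exact le_trans (E.Kfun_le r hyt heqv) ENNReal.ofReal_add_le
        _ = (ENNReal.ofReal (r ^ (-θ)) * ENNReal.ofReal ‖xs‖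
              + ENNReal.ofReal (r ^ (-θ)) * ENNReal.ofReal (r * ‖E.Adot yt‖)) ^ p := by
            rw [mul_add]
        _ ≤ 2 ^ p * ((ENNReal.ofReal (r ^ (-θ)) * ENNReal.ofReal ‖xs‖) ^ p
              + (ENNReal.ofReal (r ^ (-θ)) * ENNReal.ofReal (r * ‖E.Adot yt‖)) ^ p) :=
            add_rpow_le_two_rpow_mul _ _ hp0.le
        _ = _ := by
            rw [ofReal_mul_rpow hr0 (norm_nonneg _) hp0.le,
              combine_ofReal_pow hr0 (norm_nonneg _),
              ofReal_mul_rpow hr0 (norm_nonneg _) hp0.le]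
    calc ∫⁻ r in Set.Ioc s t, Kv r ∂haarScale
        ≤ ∫⁻ r in Set.Ioc s t, 2 ^ p *
            (ENNReal.ofReal (r ^ (-θ * p)) * ENNReal.ofReal (‖xs‖ ^ p)
              + ENNReal.ofReal (r ^ ((1 - θ) * p)) * ENNReal.ofReal (‖E.Adot yt‖ ^ p))
            ∂haarScale :=
          lintegral_mono_ae ((ae_restrict_iff' measurableSet_Ioc).2
            (Filter.Eventually.of_forall hpt))
      _ = 2 ^ p * ((∫⁻ r in Set.Ioc s t, ENNReal.ofReal (r ^ (-θ * p)) ∂haarScale)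
              * ENNReal.ofReal (‖xs‖ ^ p)
            + (∫⁻ r in Set.Ioc s t, ENNReal.ofReal (r ^ ((1 - θ) * p)) ∂haarScale)
              * ENNReal.ofReal (‖E.Adot yt‖ ^ p)) := by
          rw [lintegral_const_mul' _ _ h2top,
            lintegral_add_left (by fun_prop : Measurable fun r : ℝ =>
              ENNReal.ofReal (r ^ (-θ * p)) * ENNReal.ofReal (‖xs‖ ^ p)),
            lintegral_mul_const' _ _ ENNReal.ofReal_ne_top,
            lintegral_mul_const' _ _ ENNReal.ofReal_ne_top]
      _ ≤ 2 ^ p * (ENNReal.ofReal ρ + ENNReal.ofReal ρ) := by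
          gcongr
          · refine le_trans (mul_le_mul_left
              (lintegral_mono_set (fun r hr => hr.1)) _) ?_
            exact piece_Ioi hs0 hp0 hθ0 hη0.le (norm_nonneg _)
              (le_trans hxs (by nlinarith)) hρ2
          · refine le_trans (mul_le_mul_left
              (lintegral_mono_set (Set.Ioc_subset_Ioc_left hs0.le)) _) ?_
            exact piece_Ioc ht0 hp0 hθ1 hη0.le (norm_nonneg _)
              (le_trans hAyt (by nlinarith [Real.rpow_pos_of_pos ht0 (θ - 1)])) hρ1
  -- Region 3
  have hR3 : ∫⁻ r in Set.Ioi t, Kv r ∂haarScale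
      ≤ 2 ^ p * (ENNReal.ofReal ρ + ENNReal.ofReal ρ) := by
    have hpt : ∀ r ∈ Set.Ioi t, Kv r ≤ 2 ^ p *
        ((ENNReal.ofReal (r ^ (-θ)) * E.Kfun r z) ^ p
          + ENNReal.ofReal (r ^ (-θ * p)) * ENNReal.ofReal (‖(w : X)‖ ^ p)) := by
      intro r hr
      have hr0 : (0:ℝ) < r := lt_trans ht0 hr
      calc Kv r ≤ (ENNReal.ofReal (r ^ (-θ))
            * (E.Kfun r z + ENNReal.ofReal ‖(w : X)‖)) ^ p :=
            ENNReal.rpow_le_rpow (mul_le_mul_right (E.Kfun_sub_le₂ r w z) _) hp0.le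
        _ = (ENNReal.ofReal (r ^ (-θ)) * E.Kfun r z
              + ENNReal.ofReal (r ^ (-θ)) * ENNReal.ofReal ‖(w : X)‖) ^ p := by
            rw [mul_add]
        _ ≤ 2 ^ p * ((ENNReal.ofReal (r ^ (-θ)) * E.Kfun r z) ^ p
              + (ENNReal.ofReal (r ^ (-θ)) * ENNReal.ofReal ‖(w : X)‖) ^ p) :=
            add_rpow_le_two_rpow_mul _ _ hp0.le
        _ = _ := by
            rw [ofReal_mul_rpow hr0 (norm_nonneg _) hp0.le]
    calc ∫⁻ r in Set.Ioi t, Kv r ∂haarScale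
        ≤ ∫⁻ r in Set.Ioi t, 2 ^ p * ((ENNReal.ofReal (r ^ (-θ)) * E.Kfun r z) ^ p
            + ENNReal.ofReal (r ^ (-θ * p)) * ENNReal.ofReal (‖(w : X)‖ ^ p)) ∂haarScale :=
          lintegral_mono_ae ((ae_restrict_iff' measurableSet_Ioi).2
            (Filter.Eventually.of_forall hpt))
      _ = 2 ^ p * ((∫⁻ r in Set.Ioi t,
              (ENNReal.ofReal (r ^ (-θ)) * E.Kfun r z) ^ p ∂haarScale)
            + (∫⁻ r in Set.Ioi t, ENNReal.ofReal (r ^ (-θ * p)) ∂haarScale)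
              * ENNReal.ofReal (‖(w : X)‖ ^ p)) := by
          rw [lintegral_const_mul' _ _ h2top, lintegral_add_left hGzm,
            lintegral_mul_const' _ _ ENNReal.ofReal_ne_top]
      _ ≤ 2 ^ p * (ENNReal.ofReal ρ + ENNReal.ofReal ρ) := by
          gcongr
          · exact le_of_lt (lt_of_le_of_lt
              (lintegral_mono_set (Set.Ioi_subset_Ioi htn2)) hn₂)
          · refine le_trans (mul_le_mul_left
              (lintegral_mono_set (le_refl _)) _) ?_
            exact piece_Ioi ht0 hp0 hθ0 hη0.le (norm_nonneg _) hwn hρ2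
  -- splitting
  have hres : haarScale.restrict (Set.Ioi (0:ℝ)) = haarScale :=
    Measure.restrict_eq_self_of_ae_mem (by
      filter_upwards [haarScale_ae_pos] with r hr; exact hr)
  have hsplit : ∫⁻ r, Kv r ∂haarScale
      = (∫⁻ r in Set.Ioc 0 s, Kv r ∂haarScale) + (∫⁻ r in Set.Ioc s t, Kv r ∂haarScale)
        + (∫⁻ r in Set.Ioi t, Kv r ∂haarScale) := by
    conv_lhs => rw [← hres]
    rw [show Set.Ioi (0:ℝ) = Set.Ioc 0 t ∪ Set.Ioi t from
        (Set.Ioc_union_Ioi_eq_Ioi (le_of_lt (lt_trans hs0 hts))).symm,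
      lintegral_union measurableSet_Ioi Set.Ioc_disjoint_Ioi_same,
      show Set.Ioc (0:ℝ) t = Set.Ioc 0 s ∪ Set.Ioc s t from
        (Set.Ioc_union_Ioc_eq_Ioc hs0.le hts.le).symm,
      lintegral_union measurableSet_Ioc (Set.Ioc_disjoint_Ioc_of_le le_rfl)]
  have h2eq : ((2:ℝ≥0∞)) ^ p = ENNReal.ofReal (2 ^ p) := by
    rw [show ((2:ℝ≥0∞)) = ENNReal.ofReal 2 from (ENNReal.ofReal_ofNat 2).symm,
      ENNReal.ofReal_rpow_of_nonneg (by norm_num) hp0.le]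
  have hsum : ∫⁻ r, Kv r ∂haarScale ≤ ENNReal.ofReal (ε ^ p / 4) := by
    rw [hsplit]
    calc (∫⁻ r in Set.Ioc 0 s, Kv r ∂haarScale) + (∫⁻ r in Set.Ioc s t, Kv r ∂haarScale)
          + (∫⁻ r in Set.Ioi t, Kv r ∂haarScale)
        ≤ 2 ^ p * (ENNReal.ofReal ρ + ENNReal.ofReal ρ)
          + 2 ^ p * (ENNReal.ofReal ρ + ENNReal.ofReal ρ)
          + 2 ^ p * (ENNReal.ofReal ρ + ENNReal.ofReal ρ) :=
          add_le_add (add_le_add hR1 hR2) hR3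
      _ = 2 ^ p * (6 * ENNReal.ofReal ρ) := by ring
      _ = ENNReal.ofReal (2 ^ p * (6 * ρ)) := by
          rw [h2eq, show ((6:ℝ≥0∞)) = ENNReal.ofReal 6 from (ENNReal.ofReal_ofNat 6).symm,
            ← ENNReal.ofReal_mul (by norm_num), ← ENNReal.ofReal_mul (by positivity)]
      _ = ENNReal.ofReal (ε ^ p / 4) := by
          rw [hρdef]; congr 1; field_simp; ring
  have hgoal : E.interpNorm θ q v = (∫⁻ r, Kv r ∂haarScale) ^ (1/p) := hinterp v
  rw [hgoal]
  calc (∫⁻ r, Kv r ∂haarScale) ^ (1/p) ≤ (ENNReal.ofReal (ε ^ p / 4)) ^ (1/p) :=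
        ENNReal.rpow_le_rpow hsum (by positivity)
    _ < (ENNReal.ofReal (ε ^ p)) ^ (1/p) :=
        ENNReal.rpow_lt_rpow ((ENNReal.ofReal_lt_ofReal_iff hεp).2 (by linarith)) (by positivity)
    _ = ENNReal.ofReal ε := by
        rw [← ENNReal.ofReal_rpow_of_nonneg hε.le hp0.le, ← ENNReal.rpow_mul,
          mul_one_div, div_self hp0.ne', ENNReal.rpow_one]

end DPG

namespace DPG

/-- for `1 ≤ q < ∞` and `θ ∈ (0,1)`, the domain `D(A)` is dense in
`D_A(θ,q)` and dense in the real interpolation space `(X, D(Ȧ))_{θ,q}`. -/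
theorem domain_dense_in_intermediate_spaces
    {X Y Z : Type*} [NormedAddCommGroup X] [NormedSpace ℂ X] [CompleteSpace X]
    [NormedAddCommGroup Y] [NormedSpace ℂ Y]
    [AddCommGroup Z] [Module ℂ Z] [TopologicalSpace Z] [T2Space Z]
    (E : DPG X Y Z) :
    ∀ q : ℝ≥0∞, 1 ≤ q → q ≠ ⊤ → ∀ θ : ℝ, 0 < θ → θ < 1 →
      (∀ x : X, E.memDA θ q x → ∀ ε : ℝ, 0 < ε → ∃ w : E.dom,
        E.inhomNorm θ q (x - (w : X)) < ENNReal.ofReal ε) ∧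
      (∀ z : Z, z ∈ E.sumSpace → E.interpNorm θ q z < ⊤ → ∀ ε : ℝ, 0 < ε → ∃ w : E.dom,
        E.interpNorm θ q (z - E.ιX (w : X)) < ENNReal.ofReal ε) := by
  intro q hq1 hqt θ hθ0 hθ1
  constructor
  · intro x hx ε hε
    exact E.part1 hq1 hqt hθ0 hθ1 x hx hε
  · intro z _hz hfin ε hε
    exact E.part2 hq1 hqt hθ0 hθ1 z hfin hε

end DPG
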